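/- arXiv:2011.11222 — 5 statements merged into one kernel-verified Lean document; each statement's English description precedes it below -/
import Mathlib

section
/- For distinct reals a and b, the difference quotient of the logistic function satisfies α(a,b) := (μ(b) - μ(a))/(b - a) ≥ μ'(a)/(1 + |b - a|). -/
noncomputable def logistic (z : ℝ) : ℝ := 1 / (1 + Real.exp (-z))

lemma logistic_hasDerivAt (a : ℝ) :
    HasDerivAt logistic (Real.exp (-a) / (1 + Real.exp (-a)) ^ 2) a := by
  have h : HasDerivAt (fun z : ℝ => 1 + Real.exp (-z)) (-Real.exp (-a)) a := by
    simpa using ((Real.hasDerivAt_exp (-a)).comp a (hasDerivAt_neg a)).const_add 1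
  have hne : (1 + Real.exp (-a)) ≠ 0 := by positivity
  have H := h.inv hne
  have : logistic = fun z : ℝ => (1 + Real.exp (-z))⁻¹ := by
    funext z; simp [logistic, one_div]
  rw [this]
  simp only [neg_neg] at H; exact H

lemma logistic_deriv (a : ℝ) :
    deriv logistic a = Real.exp (-a) / (1 + Real.exp (-a)) ^ 2 :=
  (logistic_hasDerivAt a).deriv

theorem stmt_5 (a b : ℝ) (hab : a ≠ b) :
    (logistic b - logistic a) / (b - a) ≥ deriv logistic a / (1 + |b - a|) := by
  set ea := Real.exp (-a) with hea_def
  set eb := Real.exp (-b) with heb_def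
  have hea : 0 < ea := Real.exp_pos _
  have heb : 0 < eb := Real.exp_pos _
  have hdiff : logistic b - logistic a = (ea - eb) / ((1 + ea) * (1 + eb)) := by
    unfold logistic
    rw [hea_def, heb_def]
    have h1 : (1 : ℝ) + Real.exp (-a) ≠ 0 := by positivity
    have h2 : (1 : ℝ) + Real.exp (-b) ≠ 0 := by positivity
    rw [div_sub_div _ _ h2 h1, div_eq_div_iff (by positivity) (by positivity)]
    ring
  rw [logistic_deriv, hdiff]
  rcases lt_or_gt_of_ne hab with h | h
  · -- a < b
    have hD : 0 < b - a := by linarith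
    have habs : |b - a| = b - a := abs_of_pos hD
    have hle : eb ≤ ea := by
      rw [hea_def, heb_def]
      exact Real.exp_le_exp.mpr (by linarith)
    have hkey : eb * (1 + (b - a)) ≤ ea := by
      have h1 : (b - a) + 1 ≤ Real.exp (b - a) := Real.add_one_le_exp _
      have : eb * Real.exp (b - a) = ea := by
        rw [hea_def, heb_def, ← Real.exp_add]; ring_nf
      nlinarith [Real.exp_pos (b - a)]
    rw [habs, ge_iff_le, div_div, div_div,
      div_le_div_iff₀ (by positivity) (by positivity)]
    nlinarith [mul_pos hea heb, mul_pos hD hea, mul_pos (mul_pos hD hea) heb,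
      mul_nonneg (mul_nonneg hD.le hea.le) (sub_nonneg.mpr hle),
      mul_nonneg (sub_nonneg.mpr hkey) (by positivity : (0:ℝ) ≤ 1 + ea)]
  · -- b < a
    have hD : 0 < a - b := by linarith
    have habs : |b - a| = a - b := by rw [abs_sub_comm]; exact abs_of_pos hD
    have hkey : ea * (1 + (a - b)) ≤ eb := by
      have h1 : (a - b) + 1 ≤ Real.exp (a - b) := Real.add_one_le_exp _
      have : ea * Real.exp (a - b) = eb := by
        rw [hea_def, heb_def, ← Real.exp_add]; ring_nf
      nlinarith [Real.exp_pos (a - b)]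
    have hle : ea ≤ eb := by nlinarith
    have hba : b - a ≠ 0 := by intro h'; apply hab; linarith
    have heq : (ea - eb) / ((1 + ea) * (1 + eb)) / (b - a)
        = (eb - ea) / ((1 + ea) * (1 + eb) * (a - b)) := by
      rw [div_div]
      rw [div_eq_div_iff (mul_ne_zero (by positivity) hba) (by positivity)]
      ring
    rw [habs, heq, ge_iff_le, div_div,
      div_le_div_iff₀ (by positivity) (by positivity)]
    nlinarith [mul_pos hea heb, mul_pos hD hea,
      mul_nonneg (mul_nonneg hD.le hea.le) (sub_nonneg.mpr hle),
      mul_nonneg (sub_nonneg.mpr hkey) (by positivity : (0:ℝ) ≤ 1 + ea),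
      mul_nonneg (sub_nonneg.mpr hkey) hD.le]
end

section
/- For distinct reals a and b, the difference quotient α(a,b) := (μ(b) - μ(a))/(b - a) satisfies μ'(a)·(1 - e^{-|b-a|})/|b-a| ≤ α(a,b) ≤ μ'(a)·(e^{|b-a|} - 1)/|b-a|. -/
lemma hasDerivAt_logistic (x : ℝ) :
    HasDerivAt logistic (Real.exp (-x) / (1 + Real.exp (-x))^2) x := by
  have h1 : HasDerivAt (fun z : ℝ => 1 + Real.exp (-z)) (-Real.exp (-x)) x := by
    simpa using ((Real.hasDerivAt_exp (-x)).comp x (hasDerivAt_neg x)).const_add 1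
  have hne : 1 + Real.exp (-x) ≠ 0 := by positivity
  have h2 := h1.inv hne
  have hfun : logistic = fun y : ℝ => (1 + Real.exp (-y))⁻¹ := by
    funext z; simp [logistic, one_div]
  rw [hfun]
  simp only [neg_neg] at h2
  exact h2

lemma deriv_logistic (x : ℝ) :
    deriv logistic x = Real.exp (-x) / (1 + Real.exp (-x))^2 :=
  (hasDerivAt_logistic x).deriv

lemma key (x a : ℝ) :
    Real.exp (-x) / (1 + Real.exp (-x))^2
      ≤ Real.exp (-a) / (1 + Real.exp (-a))^2 * Real.exp |x - a| := by
  have hu : (0:ℝ) < Real.exp (-x) := Real.exp_pos _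
  have hv : (0:ℝ) < Real.exp (-a) := Real.exp_pos _
  set u := Real.exp (-x) with hud
  set v := Real.exp (-a) with hvd
  rcases le_total x a with h | h
  · have habs : |x - a| = a - x := by rw [abs_of_nonpos (by linarith)]; ring
    have he : Real.exp |x - a| = u / v := by
      rw [habs, hud, hvd, ← Real.exp_sub]; ring_nf
    have huv : v ≤ u := Real.exp_le_exp.2 (by linarith)
    rw [he, div_mul_div_comm, div_le_div_iff₀ (by positivity) (by positivity)]
    have hsq : (1 + v)^2 ≤ (1 + u)^2 := by nlinarith
    nlinarith [mul_pos hu hv, hsq]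
  · have habs : |x - a| = x - a := abs_of_nonneg (by linarith)
    have he : Real.exp |x - a| = v / u := by
      rw [habs, hud, hvd, ← Real.exp_sub]; ring_nf
    have huv : u ≤ v := Real.exp_le_exp.2 (by linarith)
    rw [he, div_mul_div_comm, div_le_div_iff₀ (by positivity) (by positivity)]
    have h1 : u * (1 + v) ≤ v * (1 + u) := by nlinarith
    nlinarith [mul_le_mul h1 h1 (by positivity) (by positivity), mul_pos hu hv]

lemma key' (x a : ℝ) :
    Real.exp (-a) / (1 + Real.exp (-a))^2 * Real.exp (-|x - a|)
      ≤ Real.exp (-x) / (1 + Real.exp (-x))^2 := by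
  have h := key a x
  rw [abs_sub_comm a x] at h
  have he : (0:ℝ) < Real.exp (-|x - a|) := Real.exp_pos _
  have h2 := mul_le_mul_of_nonneg_right h he.le
  simpa [mul_assoc, ← Real.exp_add] using h2

theorem stmt_6 (a b : ℝ) (hab : a ≠ b) :
    deriv logistic a * (1 - Real.exp (-|b - a|)) / |b - a|
      ≤ (logistic b - logistic a) / (b - a) ∧
    (logistic b - logistic a) / (b - a)
      ≤ deriv logistic a * (Real.exp |b - a| - 1) / |b - a| := by
  have hcont : Continuous fun x : ℝ => Real.exp (-x) / (1 + Real.exp (-x))^2 :=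
    Continuous.div (by continuity) (by continuity) (fun x => by positivity)
  set C := Real.exp (-a) / (1 + Real.exp (-a))^2 with hC
  have hCpos : 0 < C := by positivity
  rw [deriv_logistic, ← hC]
  rcases lt_or_gt_of_ne hab with h | h
  · -- a < b
    have hba : (0:ℝ) < b - a := by linarith
    have habs : |b - a| = b - a := abs_of_pos hba
    have hI : ∫ x in a..b, Real.exp (-x) / (1 + Real.exp (-x))^2
        = logistic b - logistic a :=
      intervalIntegral.integral_eq_sub_of_hasDerivAt
        (fun x _ => hasDerivAt_logistic x) (hcont.intervalIntegrable a b)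
    have hup : ∫ x in a..b, Real.exp (-x) / (1 + Real.exp (-x))^2
        ≤ ∫ x in a..b, C * Real.exp (x - a) := by
      apply intervalIntegral.integral_mono_on h.le (hcont.intervalIntegrable a b)
        ((by continuity : Continuous fun x : ℝ => C * Real.exp (x - a)).intervalIntegrable a b)
      intro x hx
      have hax : |x - a| = x - a := abs_of_nonneg (by linarith [hx.1])
      have := key x a
      rwa [hax] at this
    have hlo : ∫ x in a..b, C * Real.exp (a - x)
        ≤ ∫ x in a..b, Real.exp (-x) / (1 + Real.exp (-x))^2 := by
      apply intervalIntegral.integral_mono_on h.le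
        ((by continuity : Continuous fun x : ℝ => C * Real.exp (a - x)).intervalIntegrable a b)
        (hcont.intervalIntegrable a b)
      intro x hx
      have hax : |x - a| = x - a := abs_of_nonneg (by linarith [hx.1])
      have := key' x a
      rwa [hax, show -(x - a) = a - x by ring] at this
    have hup' : ∫ x in a..b, C * Real.exp (x - a) = C * (Real.exp (b - a) - 1) := by
      rw [intervalIntegral.integral_const_mul,
        intervalIntegral.integral_comp_sub_right (fun x => Real.exp x) a,
        integral_exp]
      simp
    have hlo' : ∫ x in a..b, C * Real.exp (a - x) = C * (1 - Real.exp (a - b)) := by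
      rw [intervalIntegral.integral_const_mul,
        intervalIntegral.integral_comp_sub_left (fun x => Real.exp x) a,
        integral_exp]
      simp
    rw [hup', hI] at hup
    rw [hlo', hI] at hlo
    rw [habs, show -(b - a) = a - b by ring]
    constructor
    · gcongr
    · gcongr
  · -- b < a
    have hba : (0:ℝ) < a - b := by linarith
    have habs : |b - a| = a - b := by rw [abs_of_neg (by linarith)]; ring
    have hq : (logistic b - logistic a) / (b - a)
        = (logistic a - logistic b) / (a - b) := by
      rw [show logistic a - logistic b = -(logistic b - logistic a) by ring,
        show a - b = -(b - a) by ring, neg_div_neg_eq]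
    have hI : ∫ x in b..a, Real.exp (-x) / (1 + Real.exp (-x))^2
        = logistic a - logistic b :=
      intervalIntegral.integral_eq_sub_of_hasDerivAt
        (fun x _ => hasDerivAt_logistic x) (hcont.intervalIntegrable b a)
    have hup : ∫ x in b..a, Real.exp (-x) / (1 + Real.exp (-x))^2
        ≤ ∫ x in b..a, C * Real.exp (a - x) := by
      apply intervalIntegral.integral_mono_on h.le (hcont.intervalIntegrable b a)
        ((by continuity : Continuous fun x : ℝ => C * Real.exp (a - x)).intervalIntegrable b a)
      intro x hx
      have hax : |x - a| = a - x := by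
        rw [abs_of_nonpos (by linarith [hx.2])]; ring
      have := key x a
      rwa [hax] at this
    have hlo : ∫ x in b..a, C * Real.exp (x - a)
        ≤ ∫ x in b..a, Real.exp (-x) / (1 + Real.exp (-x))^2 := by
      apply intervalIntegral.integral_mono_on h.le
        ((by continuity : Continuous fun x : ℝ => C * Real.exp (x - a)).intervalIntegrable b a)
        (hcont.intervalIntegrable b a)
      intro x hx
      have hax : |x - a| = a - x := by
        rw [abs_of_nonpos (by linarith [hx.2])]; ring
      have := key' x a
      rwa [hax, show -(a - x) = x - a by ring] at this
    have hup' : ∫ x in b..a, C * Real.exp (a - x) = C * (Real.exp (a - b) - 1) := by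
      rw [intervalIntegral.integral_const_mul,
        intervalIntegral.integral_comp_sub_left (fun x => Real.exp x) a,
        integral_exp]
      simp
    have hlo' : ∫ x in b..a, C * Real.exp (x - a) = C * (1 - Real.exp (b - a)) := by
      rw [intervalIntegral.integral_const_mul,
        intervalIntegral.integral_comp_sub_right (fun x => Real.exp x) a,
        integral_exp]
      simp
    rw [hup', hI] at hup
    rw [hlo', hI] at hlo
    rw [habs, hq, show -(a - b) = b - a by ring]
    constructor
    · gcongr
    · gcongr
end

section
/- Let D ∈ ℝ with 0 ≤ D ≤ 3/5 and define Q := max{D/(1+D), (e^D - 1 - D)/D} (with Q = 0 when D = 0). Then (1+D)·Q ≤ D. -/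
theorem stmt_8 (D : ℝ) (h0 : 0 ≤ D) (h1 : D ≤ 3 / 5) :
    (1 + D) * max (D / (1 + D)) ((Real.exp D - 1 - D) / D) ≤ D := by
  rcases eq_or_lt_of_le h0 with h | hD
  · subst h; simp
  · have hD1 : (0:ℝ) < 1 + D := by linarith
    have hexp : Real.exp D ≤ (∑ m ∈ Finset.range 4, D ^ m / m.factorial) +
        D ^ 4 * (4 + 1) / ((4 : ℕ).factorial * 4) :=
      Real.exp_bound' h0 (by linarith) (by norm_num)
    have hexp' : Real.exp D ≤ 1 + D + D^2/2 + D^3/6 + 5*D^4/96 := by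
      simp [Finset.sum_range_succ, Nat.factorial] at hexp
      nlinarith [hexp]
    have key : (Real.exp D - 1 - D) / D ≤ D / (1 + D) := by
      rw [div_le_div_iff₀ hD hD1]
      nlinarith [sq_nonneg D, pow_pos hD 3, pow_pos hD 4, sq_nonneg (D - 3/5)]
    rw [max_eq_left key, mul_div_cancel₀ _ (ne_of_gt hD1)]
end

section
/- Suppose a > 0, b > 2, c > 0, d ≥ 0, and t ≥ max{(2a)²·(ln((2a)²/c) + ln b + d)², 2c}. Then √t ≥ a·(log(b + t/c) + d). -/
theorem stmt_17 (a b c d t : ℝ) (ha : 0 < a) (hb : 2 < b) (hc : 0 < c) (hd : 0 ≤ d)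
    (ht : max ((2 * a) ^ 2 * (Real.log ((2 * a) ^ 2 / c) + Real.log b + d) ^ 2) (2 * c) ≤ t) :
    Real.sqrt t ≥ a * (Real.log (b + t / c) + d) := by
  set L : ℝ := Real.log ((2 * a) ^ 2 / c) + Real.log b + d with hLdef
  have h2c : 2 * c ≤ t := le_trans (le_max_right _ _) ht
  have htpos : 0 < t := lt_of_lt_of_le (by positivity) h2c
  set s : ℝ := Real.sqrt t with hsdef
  have hs : 0 < s := Real.sqrt_pos.2 htpos
  have hst : s ^ 2 = t := Real.sq_sqrt htpos.le
  -- s ≥ 2aL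
  have h1 : 2 * a * L ≤ s := by
    have hq : (2 * a * L) ^ 2 ≤ t := by
      have := le_trans (le_max_left _ (2 * c)) ht
      nlinarith [this]
    calc 2 * a * L ≤ |2 * a * L| := le_abs_self _
      _ = Real.sqrt ((2 * a * L) ^ 2) := (Real.sqrt_sq_eq_abs _).symm
      _ ≤ s := Real.sqrt_le_sqrt hq
  -- tangent bound
  have e1 : Real.log (s / (4 * a)) ≤ s / (4 * a) - 1 :=
    Real.log_le_sub_one_of_pos (by positivity)
  have P1 : 2 * a * Real.log (s / (4 * a)) ≤ s / 2 - 2 * a := by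
    have := mul_le_mul_of_nonneg_left e1 (by positivity : (0:ℝ) ≤ 2 * a)
    have h4a : 2 * a * (s / (4 * a) - 1) = s / 2 - 2 * a := by
      field_simp
      ring
    linarith [this, h4a.le, h4a.ge]
  have h4 : Real.log 4 = 2 * Real.log 2 := by
    rw [show (4:ℝ) = 2 ^ 2 by norm_num, Real.log_pow]
    push_cast; ring
  have P2 : Real.log (t / c) =
      2 * Real.log (s / (4 * a)) + 4 * Real.log 2 + 2 * Real.log a - Real.log c := by
    rw [← hst, Real.log_div (by positivity) hc.ne',
      Real.log_div hs.ne' (by positivity),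
      Real.log_mul (by norm_num : (4:ℝ) ≠ 0) ha.ne', Real.log_pow, h4]
    push_cast; ring
  have P3 : Real.log (b + t / c) ≤ Real.log b + Real.log (t / c) := by
    have h2 : (2:ℝ) ≤ t / c := by rw [le_div_iff₀ hc]; linarith
    have hbt : b + t / c ≤ b * (t / c) := by nlinarith
    calc Real.log (b + t / c) ≤ Real.log (b * (t / c)) :=
          Real.log_le_log (by positivity) hbt
      _ = Real.log b + Real.log (t / c) :=
          Real.log_mul (by positivity) (by positivity)
  have hLexp : L = 2 * Real.log 2 + 2 * Real.log a - Real.log c + Real.log b + d := by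
    rw [hLdef, Real.log_div (by positivity) hc.ne',
      show (2 * a) ^ 2 = 4 * a ^ 2 by ring,
      Real.log_mul (by norm_num : (4:ℝ) ≠ 0) (by positivity), h4, Real.log_pow]
    push_cast; ring
  have P3a := mul_le_mul_of_nonneg_left P3 ha.le
  have P2a : a * Real.log (t / c) =
      2 * a * Real.log (s / (4 * a)) + 4 * a * Real.log 2 + 2 * a * Real.log a
        - a * Real.log c := by rw [P2]; ring
  have P5a : a * Real.log 2 ≤ a :=
    calc a * Real.log 2 ≤ a * 1 :=
          mul_le_mul_of_nonneg_left (Real.log_two_lt_d9.le.trans (by norm_num)) ha.le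
      _ = a := mul_one a
  have h1' : 2 * a * (2 * Real.log 2 + 2 * Real.log a - Real.log c + Real.log b + d) ≤ s := by
    rw [← hLexp]; exact h1
  nlinarith [P3a, P2a, P1, h1', P5a]
end

section
/- Let u = arctan(√(2/(1+ε))) for ε ∈ (0, 1/2], and let a, a' be unit vectors in ℝ^{d−1} with |a^T a'| ≤ ε. Set z = (cos u, sin(u)·a) and θ/S = (−cos u, sin(u)·a') in ℝ^d. Then z^T(θ/S) ∈ [−(1+3ε)/(3+ε), (ε−1)/(3+ε)]; moreover if a = a' then z^T(θ/S) = (1−ε)/(3+ε) > 0. -/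
theorem stmt_19 (d : ℕ) (ε S : ℝ) (hε : 0 < ε) (hε2 : ε ≤ 1 / 2) (hS : 0 < S)
    (a a' : EuclideanSpace ℝ (Fin d)) (ha : ‖a‖ = 1) (ha' : ‖a'‖ = 1)
    (u : ℝ) (hu : u = Real.arctan (Real.sqrt (2 / (1 + ε)))) :
    (|(inner ℝ a a' : ℝ)| ≤ ε →
      Real.cos u * (-Real.cos u) + Real.sin u * Real.sin u * (inner ℝ a a' : ℝ)
        ∈ Set.Icc (-((1 + 3 * ε) / (3 + ε))) ((ε - 1) / (3 + ε))) ∧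
    (Real.cos u * (-Real.cos u) + Real.sin u * Real.sin u * (inner ℝ a a : ℝ)
        = (1 - ε) / (3 + ε)) ∧
    (0 : ℝ) < (1 - ε) / (3 + ε) := by
  have h1 : (0:ℝ) < 1 + ε := by linarith
  have h3 : (0:ℝ) < 3 + ε := by linarith
  have hy2 : Real.sqrt (2 / (1 + ε)) ^ 2 = 2 / (1 + ε) :=
    Real.sq_sqrt (by positivity)
  have h1y : 1 + Real.sqrt (2 / (1 + ε)) ^ 2 = (3 + ε) / (1 + ε) := by
    rw [hy2]; field_simp; ring
  have hc : Real.cos u ^ 2 = (1 + ε) / (3 + ε) := by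
    rw [hu, Real.cos_arctan, div_pow, one_pow]
    rw [Real.sq_sqrt (by positivity), h1y, one_div_div]
  have hs : Real.sin u ^ 2 = 2 / (3 + ε) := by
    have h := Real.sin_sq_add_cos_sq u
    rw [hc] at h
    have : (2:ℝ) / (3 + ε) = 1 - (1 + ε) / (3 + ε) := by field_simp; norm_num
    linarith
  have hself : (inner ℝ a a : ℝ) = 1 := by
    rw [real_inner_self_eq_norm_sq, ha]; norm_num
  have hcne : (3 + ε) ≠ 0 := ne_of_gt h3
  have h1e : (0:ℝ) < 1 - ε := by linarith
  refine ⟨?_, ?_, by positivity⟩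
  · intro hab
    have habs := abs_le.mp hab
    constructor
    · have : Real.cos u * (-Real.cos u) + Real.sin u * Real.sin u * (inner ℝ a a' : ℝ)
        = -((1 + ε) / (3 + ε)) + (2 / (3 + ε)) * (inner ℝ a a' : ℝ) := by
        nlinarith [hc, hs]
      rw [this]
      have h2 : (0:ℝ) < 2 / (3 + ε) := by positivity
      have hmono := mul_le_mul_of_nonneg_left habs.1 (le_of_lt h2)
      have key : -((1 + 3 * ε) / (3 + ε)) = -((1 + ε) / (3 + ε)) + 2 / (3 + ε) * (-ε) := by
        field_simp; ring
      linarith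
    · have : Real.cos u * (-Real.cos u) + Real.sin u * Real.sin u * (inner ℝ a a' : ℝ)
        = -((1 + ε) / (3 + ε)) + (2 / (3 + ε)) * (inner ℝ a a' : ℝ) := by
        nlinarith [hc, hs]
      rw [this]
      have h2 : (0:ℝ) < 2 / (3 + ε) := by positivity
      have hmono := mul_le_mul_of_nonneg_left habs.2 (le_of_lt h2)
      have key : (ε - 1) / (3 + ε) = -((1 + ε) / (3 + ε)) + 2 / (3 + ε) * ε := by
        field_simp; ring
      linarith
  · rw [hself]
    have : Real.cos u * (-Real.cos u) + Real.sin u * Real.sin u * 1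
        = -((1 + ε) / (3 + ε)) + 2 / (3 + ε) := by nlinarith [hc, hs]
    rw [this]; field_simp; ring
end
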